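/- arXiv:1509.06430 — 3 statements merged into one kernel-verified Lean document; each statement's English description precedes it below -/
import Mathlib

section
/- Witness DAGs G_1, …, G_l are pairwise consistent if and only if there exists a witness DAG H such that G_1, …, G_l are all prefixes of H. -/
open scoped Classical

namespace LLL

/-- Two bad events are dependent iff their variable sets intersect. -/
def Dep {n : ℕ} {E : Type} (S : E → Finset (Fin n)) (b b' : E) : Prop :=
  (S b ∩ S b').Nonempty

/-- A finite directed graph with nodes labeled by bad events. -/
structure LGraph (E : Type) where
  V : Type
  fin : Fintype V
  label : V → E
  edge : V → V → Prop

attribute [instance] LGraph.fin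

namespace LGraph

variable {n : ℕ} {E : Type}

/-- A labeled digraph is a witness DAG: it is acyclic, any two nodes with
dependent labels are joined by an edge (in one direction), and nodes with
non-dependent labels have no edge. -/
def IsWDag (S : E → Finset (Fin n)) (G : LGraph E) : Prop :=
  (∀ v, ¬ Relation.TransGen G.edge v v) ∧
  (∀ v w, G.edge v w → Dep S (G.label v) (G.label w)) ∧
  (∀ v w : G.V, v ≠ w → Dep S (G.label v) (G.label w) → G.edge v w ∨ G.edge w v)

/-- A node is a sink if it has no outgoing edge. -/
def IsSink (G : LGraph E) (v : G.V) : Prop := ∀ w, ¬ G.edge v w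

/-- Induced subgraph on a set of vertices. -/
noncomputable def induce (G : LGraph E) (s : Set G.V) : LGraph E where
  V := s
  fin := (Set.toFinite s).fintype
  label := fun v => G.label v.1
  edge := fun v w => G.edge v.1 w.1

/-- The set of vertices having a directed path to at least one vertex of `s`. -/
def ReachSet (G : LGraph E) (s : Set G.V) : Set G.V :=
  {u | ∃ v ∈ s, Relation.ReflTransGen G.edge u v}

/-- Isomorphism of labeled digraphs. -/
def LIso (G H : LGraph E) : Prop :=
  ∃ e : G.V ≃ H.V, (∀ v, H.label (e v) = G.label v) ∧
    ∀ v w, H.edge (e v) (e w) ↔ G.edge v w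

/-- `G` is a prefix of `H`: `G` is (isomorphic to) the subgraph of `H` induced
on all vertices having a path to a given set of vertices. -/
def IsPrefix (G H : LGraph E) : Prop :=
  ∃ s : Set H.V, LIso G (H.induce (H.ReachSet s))

/-- The position of node v among the nodes with the same label (the number of
same-labeled nodes strictly preceding it). -/
noncomputable def pos (G : LGraph E) (v : G.V) : ℕ :=
  (Finset.univ.filter fun u => G.label u = G.label v ∧ Relation.TransGen G.edge u v).card

/-- The node v has extended label bk = (B, k). -/
def HasExt (G : LGraph E) (v : G.V) (bk : E × ℕ) : Prop :=
  G.label v = bk.1 ∧ G.pos v = bk.2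

/-- The extended label bk = (B, k) occurs in G. -/
def Occurs (G : LGraph E) (bk : E × ℕ) : Prop := ∃ v, G.HasExt v bk

/-- The number of nodes strictly preceding `v` whose label involves variable `i`. -/
noncomputable def vcount (S : E → Finset (Fin n)) (G : LGraph E) (i : Fin n) (v : G.V) : ℕ :=
  (Finset.univ.filter fun u => i ∈ S (G.label u) ∧ Relation.TransGen G.edge u v).card

/-- Position k of the path G[i] of variable i is occupied by a node labeled b. -/
def VOccurs (S : E → Finset (Fin n)) (G : LGraph E) (i : Fin n) (k : ℕ) (b : E) : Prop :=
  ∃ v, i ∈ S (G.label v) ∧ vcount S G i v = k ∧ G.label v = b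

/-- G[i] is an initial segment of G'[i] (as labeled ordered graphs). -/
def InitSeg (S : E → Finset (Fin n)) (G G' : LGraph E) (i : Fin n) : Prop :=
  ∀ k b, VOccurs S G i k b → VOccurs S G' i k b

/-- Witness DAGs G, G' are consistent: for each variable i, either G[i] is an
initial segment of G'[i] or vice versa. -/
def Consistent (S : E → Finset (Fin n)) (G G' : LGraph E) : Prop :=
  ∀ i : Fin n, InitSeg S G G' i ∨ InitSeg S G' G i

/-- The merge G ∨ G' of two witness DAGs: one node for each extended label
occurring in G or G', with an edge between two extended labels iff G or G' has
an edge between nodes with those extended labels. -/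
noncomputable def merge (G G' : LGraph E) : LGraph E where
  V := {bk : E × ℕ // G.Occurs bk ∨ G'.Occurs bk}
  fin := by
    have hsub : {bk : E × ℕ | G.Occurs bk ∨ G'.Occurs bk} ⊆
        (Set.range fun v : G.V => (G.label v, G.pos v)) ∪
        (Set.range fun v : G'.V => (G'.label v, G'.pos v)) := by
      rintro bk (⟨v, hv1, hv2⟩ | ⟨v, hv1, hv2⟩)
      · exact Or.inl ⟨v, by simp [hv1, hv2]⟩
      · exact Or.inr ⟨v, by simp [hv1, hv2]⟩
    exact (((Set.finite_range _).union (Set.finite_range _)).subset hsub).fintype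
  label := fun bk => bk.1.1
  edge := fun a b =>
    (∃ v w, G.HasExt v a.1 ∧ G.HasExt w b.1 ∧ G.edge v w) ∨
    (∃ v w, G'.HasExt v a.1 ∧ G'.HasExt w b.1 ∧ G'.edge v w)

/-- A witness DAG G is compatible with a resampling table R: for every node v,
the label of v is true on the configuration read off from R. -/
def Compat {Vl : Type} (S : E → Finset (Fin n)) (Ev : E → (Fin n → Vl) → Prop)
    (G : LGraph E) (R : Fin n → ℕ → Vl) : Prop :=
  ∀ v : G.V, Ev (G.label v) (fun i => R i (vcount S G i v))

/-- A witness DAG is collectible to b if b is dependent with the labels of all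
its sink nodes; it is collectible if it is collectible to some bad event. -/
def Collectible (S : E → Finset (Fin n)) (G : LGraph E) : Prop :=
  ∃ b : E, ∀ v, G.IsSink v → Dep S b (G.label v)

end LGraph



set_option linter.unusedSectionVars false

namespace Aux


variable {α : Type} [Fintype α]

noncomputable def rnkF (t : Finset α) (r : α → α → Prop) (v : α) : ℕ :=
  (t.filter fun u => r u v).card

variable {t : Finset α} {r : α → α → Prop}

lemma rnkF_lt_of (htr : ∀ a ∈ t, ∀ b ∈ t, ∀ c ∈ t, r a b → r b c → r a c)
    (hir : ∀ a ∈ t, ¬ r a a) {u v : α} (hu : u ∈ t) (hv : v ∈ t) (h : r u v) :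
    rnkF t r u < rnkF t r v := by
  apply Finset.card_lt_card
  constructor
  · intro a ha
    simp only [Finset.mem_filter] at ha ⊢
    exact ⟨ha.1, htr a ha.1 u hu v hv ha.2 h⟩
  · intro hsub
    have := hsub (Finset.mem_filter.2 ⟨hu, h⟩)
    exact hir u hu (Finset.mem_filter.1 this).2

lemma r_of_rnkF_lt (htr : ∀ a ∈ t, ∀ b ∈ t, ∀ c ∈ t, r a b → r b c → r a c)
    (hir : ∀ a ∈ t, ¬ r a a) (hto : ∀ a ∈ t, ∀ b ∈ t, a ≠ b → r a b ∨ r b a)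
    {u v : α} (hu : u ∈ t) (hv : v ∈ t) (h : rnkF t r u < rnkF t r v) : r u v := by
  rcases eq_or_ne u v with rfl | hne
  · exact absurd h (lt_irrefl _)
  rcases hto u hu v hv hne with h' | h'
  · exact h'
  · exact absurd (rnkF_lt_of htr hir hv hu h') (Nat.lt_asymm h)

lemma rnkF_inj (htr : ∀ a ∈ t, ∀ b ∈ t, ∀ c ∈ t, r a b → r b c → r a c)
    (hir : ∀ a ∈ t, ¬ r a a) (hto : ∀ a ∈ t, ∀ b ∈ t, a ≠ b → r a b ∨ r b a)
    {u v : α} (hu : u ∈ t) (hv : v ∈ t) (h : rnkF t r u = rnkF t r v) : u = v := by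
  by_contra hne
  rcases hto u hu v hv hne with h' | h'
  · exact absurd h (Nat.ne_of_lt (rnkF_lt_of htr hir hu hv h'))
  · exact absurd h.symm (Nat.ne_of_lt (rnkF_lt_of htr hir hv hu h'))

lemma rnkF_lt_card (hir : ∀ a ∈ t, ¬ r a a) {v : α} (hv : v ∈ t) :
    rnkF t r v < t.card := by
  have hsub : t.filter (fun u => r u v) ⊆ t.erase v := by
    intro a ha
    rcases Finset.mem_filter.1 ha with ⟨hat, har⟩
    refine Finset.mem_erase.2 ⟨?_, hat⟩
    rintro rfl; exact hir a hat har
  calc rnkF t r v ≤ (t.erase v).card := Finset.card_le_card hsub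
    _ < t.card := Finset.card_erase_lt_of_mem hv

lemma exists_rnkF (htr : ∀ a ∈ t, ∀ b ∈ t, ∀ c ∈ t, r a b → r b c → r a c)
    (hir : ∀ a ∈ t, ¬ r a a) (hto : ∀ a ∈ t, ∀ b ∈ t, a ≠ b → r a b ∨ r b a)
    {k : ℕ} (hk : k < t.card) : ∃ v ∈ t, rnkF t r v = k := by
  set f : {x // x ∈ t} → Fin t.card := fun x => ⟨rnkF t r x.1, rnkF_lt_card hir x.2⟩ with hf
  have hinj : Function.Injective f := by
    intro a b hab
    exact Subtype.ext (rnkF_inj htr hir hto a.2 b.2 (congrArg Fin.val hab))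
  have hbij : Function.Bijective f := by
    rw [Fintype.bijective_iff_injective_and_card]
    exact ⟨hinj, by simp [Fintype.card_coe]⟩
  obtain ⟨x, hx⟩ := hbij.2 ⟨k, hk⟩
  exact ⟨x.1, x.2, congrArg Fin.val hx⟩

end Aux

namespace LGraph
open Aux

variable {n : ℕ} {E : Type}

/-- nodes whose label involves variable i -/
noncomputable def tvar (S : E → Finset (Fin n)) (G : LGraph E) (i : Fin n) : Finset G.V :=
  Finset.univ.filter (fun v => i ∈ S (G.label v))

/-- nodes with label b -/
noncomputable def tlab (G : LGraph E) (b : E) : Finset G.V :=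
  Finset.univ.filter (fun v => G.label v = b)

lemma vcount_eq (S : E → Finset (Fin n)) (G : LGraph E) (i : Fin n) (v : G.V) :
    vcount S G i v = rnkF (tvar S G i) (Relation.TransGen G.edge) v := by
  rw [vcount, rnkF, tvar, Finset.filter_filter]

lemma pos_eq (G : LGraph E) (v : G.V) :
    G.pos v = rnkF (tlab G (G.label v)) (Relation.TransGen G.edge) v := by
  rw [pos, rnkF, tlab, Finset.filter_filter]

section WD
variable {S : E → Finset (Fin n)} {G : LGraph E} (hG : G.IsWDag S)

lemma tg_trans : ∀ a ∈ (∅ : Finset G.V), True := fun _ _ => trivial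

lemma htr_any (t : Finset G.V) :
    ∀ a ∈ t, ∀ b ∈ t, ∀ c ∈ t, Relation.TransGen G.edge a b →
      Relation.TransGen G.edge b c → Relation.TransGen G.edge a c :=
  fun a _ b _ c _ hab hbc => hab.trans hbc

include hG in
lemma hir_any (t : Finset G.V) : ∀ a ∈ t, ¬ Relation.TransGen G.edge a a :=
  fun a _ => hG.1 a

include hG in
lemma hto_tvar (i : Fin n) :
    ∀ a ∈ tvar S G i, ∀ b ∈ tvar S G i, a ≠ b →
      Relation.TransGen G.edge a b ∨ Relation.TransGen G.edge b a := by
  intro a ha b hb hne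
  rw [tvar, Finset.mem_filter] at ha hb
  have hdep : Dep S (G.label a) (G.label b) := ⟨i, Finset.mem_inter.2 ⟨ha.2, hb.2⟩⟩
  rcases hG.2.2 a b hne hdep with h | h
  · exact Or.inl (Relation.TransGen.single h)
  · exact Or.inr (Relation.TransGen.single h)

include hG in
lemma hto_tlab {b : E} (hb : (S b).Nonempty) :
    ∀ a ∈ tlab G b, ∀ a' ∈ tlab G b, a ≠ a' →
      Relation.TransGen G.edge a a' ∨ Relation.TransGen G.edge a' a := by
  intro a ha a' ha' hne
  rw [tlab, Finset.mem_filter] at ha ha'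
  have hdep : Dep S (G.label a) (G.label a') := by
    rw [ha.2, ha'.2]; exact ⟨hb.choose, Finset.mem_inter.2 ⟨hb.choose_spec, hb.choose_spec⟩⟩
  rcases hG.2.2 a a' hne hdep with h | h
  · exact Or.inl (Relation.TransGen.single h)
  · exact Or.inr (Relation.TransGen.single h)

/-- length of the i-sequence -/
noncomputable def lenI (S : E → Finset (Fin n)) (G : LGraph E) (i : Fin n) : ℕ :=
  (tvar S G i).card

lemma voccurs_iff {i : Fin n} {k : ℕ} {b : E} :
    VOccurs S G i k b ↔ ∃ v ∈ tvar S G i, vcount S G i v = k ∧ G.label v = b := by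
  constructor
  · rintro ⟨v, h1, h2, h3⟩
    exact ⟨v, Finset.mem_filter.2 ⟨Finset.mem_univ _, h1⟩, h2, h3⟩
  · rintro ⟨v, hv, h2, h3⟩
    exact ⟨v, (Finset.mem_filter.1 hv).2, h2, h3⟩

include hG in
lemma voccurs_lt_len {i : Fin n} {k : ℕ} {b : E} (h : VOccurs S G i k b) :
    k < lenI S G i := by
  obtain ⟨v, hv, h2, _⟩ := voccurs_iff.1 h
  rw [← h2, vcount_eq]
  exact rnkF_lt_card (hir_any hG _) hv

include hG in
lemma voccurs_exists {i : Fin n} {k : ℕ} (h : k < lenI S G i) :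
    ∃ b, VOccurs S G i k b := by
  obtain ⟨v, hv, h2⟩ := exists_rnkF (htr_any _) (hir_any hG _) (hto_tvar hG i) h
  exact ⟨G.label v, voccurs_iff.2 ⟨v, hv, by rw [vcount_eq]; exact h2, rfl⟩⟩

include hG in
lemma vcount_node_inj {i : Fin n} {u v : G.V} (hu : u ∈ tvar S G i) (hv : v ∈ tvar S G i)
    (h : vcount S G i u = vcount S G i v) : u = v := by
  rw [vcount_eq, vcount_eq] at h
  exact rnkF_inj (htr_any _) (hir_any hG _) (hto_tvar hG i) hu hv h

include hG in
lemma voccurs_unique {i : Fin n} {k : ℕ} {b b' : E}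
    (h : VOccurs S G i k b) (h' : VOccurs S G i k b') : b = b' := by
  obtain ⟨v, hv, h2, h3⟩ := voccurs_iff.1 h
  obtain ⟨v', hv', h2', h3'⟩ := voccurs_iff.1 h'
  rw [← h3, ← h3']
  congr 1
  exact vcount_node_inj hG hv hv' (h2.trans h2'.symm)

include hG in
lemma transgen_of_vcount_lt {i : Fin n} {u v : G.V} (hu : u ∈ tvar S G i)
    (hv : v ∈ tvar S G i) (h : vcount S G i u < vcount S G i v) :
    Relation.TransGen G.edge u v := by
  rw [vcount_eq, vcount_eq] at h
  exact r_of_rnkF_lt (htr_any _) (hir_any hG _) (hto_tvar hG i) hu hv h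

include hG in
lemma vcount_lt_of_transgen {i : Fin n} {u v : G.V} (hu : u ∈ tvar S G i)
    (hv : v ∈ tvar S G i) (h : Relation.TransGen G.edge u v) :
    vcount S G i u < vcount S G i v := by
  rw [vcount_eq, vcount_eq]
  exact rnkF_lt_of (htr_any _) (hir_any hG _) hu hv h

include hG in
lemma vcount_lt_lenI {i : Fin n} {v : G.V} (hiv : i ∈ S (G.label v)) :
    vcount S G i v < lenI S G i := by
  rw [vcount_eq]
  exact rnkF_lt_card (hir_any hG _) (Finset.mem_filter.2 ⟨Finset.mem_univ _, hiv⟩)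

end WD
end LGraph



namespace LGraph
open Aux

variable {n : ℕ} {E : Type} {S : E → Finset (Fin n)}

lemma consistent_symm {G G' : LGraph E} (hc : Consistent S G G') : Consistent S G' G :=
  fun i => (hc i).symm

/-- bridge between pos (same-label rank) and the i-sequence -/
lemma pos_bridge {G : LGraph E} (hG : G.IsWDag S) {i : Fin n} {v : G.V}
    (hiv : i ∈ S (G.label v)) :
    G.pos v = ((Finset.range (vcount S G i v)).filter
      fun k => VOccurs S G i k (G.label v)).card := by
  have hvt : v ∈ tvar S G i := Finset.mem_filter.2 ⟨Finset.mem_univ _, hiv⟩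
  rw [pos]
  apply Finset.card_bij (fun u _ => vcount S G i u)
  · intro u hu
    rw [Finset.mem_filter] at hu
    have hut : u ∈ tvar S G i := Finset.mem_filter.2
      ⟨Finset.mem_univ _, by rw [hu.2.1]; exact hiv⟩
    refine Finset.mem_filter.2 ⟨Finset.mem_range.2 ?_, ?_⟩
    · exact vcount_lt_of_transgen hG hut hvt hu.2.2
    · exact ⟨u, by rw [hu.2.1]; exact hiv, rfl, hu.2.1⟩
  · intro a ha b hb hab
    rw [Finset.mem_filter] at ha hb
    exact vcount_node_inj hG
      (Finset.mem_filter.2 ⟨Finset.mem_univ _, by rw [ha.2.1]; exact hiv⟩)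
      (Finset.mem_filter.2 ⟨Finset.mem_univ _, by rw [hb.2.1]; exact hiv⟩) hab
  · intro k hk
    rw [Finset.mem_filter, Finset.mem_range] at hk
    obtain ⟨u, hiu, hcu, hlu⟩ := hk.2
    have hut : u ∈ tvar S G i := Finset.mem_filter.2 ⟨Finset.mem_univ _, hiu⟩
    have htg : Relation.TransGen G.edge u v :=
      transgen_of_vcount_lt hG hut hvt (by rw [hcu]; exact hk.1)
    exact ⟨u, Finset.mem_filter.2 ⟨Finset.mem_univ _, hlu, htg⟩, hcu⟩

section Pair
variable {G G' : LGraph E} (hG : G.IsWDag S) (hG' : G'.IsWDag S)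
  (hc : Consistent S G G')

include hG hG' hc

lemma cross_unique {i : Fin n} {k : ℕ} {b b' : E}
    (h : VOccurs S G i k b) (h' : VOccurs S G' i k b') : b = b' := by
  rcases hc i with hi | hi
  · exact voccurs_unique hG' (hi k b h) h'
  · exact voccurs_unique hG h (hi k b' h')

lemma cross_trans {i : Fin n} {k : ℕ} {b : E}
    (h : VOccurs S G i k b) (hk : k < lenI S G' i) : VOccurs S G' i k b := by
  obtain ⟨b', hb'⟩ := voccurs_exists hG' hk
  rwa [cross_unique hG hG' hc h hb']

/-- node at the same i-position in a consistent WD has same label and pos -/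
lemma cross_node {i : Fin n} {v : G.V} (hiv : i ∈ S (G.label v)) {v' : G'.V}
    (hiv' : i ∈ S (G'.label v'))
    (hq : vcount S G' i v' = vcount S G i v) :
    G'.label v' = G.label v ∧ G'.pos v' = G.pos v := by
  set p := vcount S G i v with hp
  have hvt : v ∈ tvar S G i := Finset.mem_filter.2 ⟨Finset.mem_univ _, hiv⟩
  have hvt' : v' ∈ tvar S G' i := Finset.mem_filter.2 ⟨Finset.mem_univ _, hiv'⟩
  have ho : VOccurs S G i p (G.label v) := ⟨v, hiv, rfl, rfl⟩
  have ho' : VOccurs S G' i p (G'.label v') := ⟨v', hiv', hq, rfl⟩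
  have hlab : G'.label v' = G.label v := (cross_unique hG hG' hc ho ho').symm
  refine ⟨hlab, ?_⟩
  rw [pos_bridge hG' hiv', pos_bridge hG hiv, hq, ← hp, hlab]
  congr 1
  apply Finset.filter_congr
  intro k hk
  rw [Finset.mem_range] at hk
  have hkG : k < lenI S G i := lt_trans hk (hp ▸ vcount_lt_lenI hG hiv)
  have hkG' : k < lenI S G' i := lt_trans (hq ▸ hk) (vcount_lt_lenI hG' hiv')
  constructor
  · intro h; exact cross_trans hG' hG (consistent_symm hc) h hkG
  · intro h; exact cross_trans hG hG' hc h hkG'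

/-- the extended label determines the position in the i-sequence -/
lemma ext_pos_det_aux {i : Fin n} {w : G.V} (hiw : i ∈ S (G.label w)) {w' : G'.V}
    (hl : G'.label w' = G.label w) (hp : G'.pos w' = G.pos w) :
    ¬ (vcount S G' i w' < vcount S G i w) := by
  intro hlt
  set q' := vcount S G' i w' with hq'
  set q := vcount S G i w with hq
  have hiw' : i ∈ S (G'.label w') := by rw [hl]; exact hiw
  have hqlen : q < lenI S G i := hq ▸ vcount_lt_lenI hG hiw
  have hq'len : q' < lenI S G' i := hq' ▸ vcount_lt_lenI hG' hiw'
  -- positions k ≤ q' are < q ≤ lenI G, and < lenI G'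
  have hagree : ∀ k ≤ q', (VOccurs S G i k (G.label w) ↔ VOccurs S G' i k (G.label w)) := by
    intro k hk
    have hkG : k < lenI S G i := lt_trans (lt_of_le_of_lt hk hlt) hqlen
    have hkG' : k < lenI S G' i := lt_of_le_of_lt hk hq'len
    exact ⟨fun h => cross_trans hG hG' hc h hkG', fun h => cross_trans hG' hG (consistent_symm hc) h hkG⟩
  set T := (Finset.range (q' + 1)).filter (fun k => VOccurs S G i k (G.label w)) with hT
  have hTcard : T.card = G'.pos w' + 1 := by
    rw [hT, Finset.range_add_one, Finset.filter_insert, if_pos, Finset.card_insert_of_notMem]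
    · congr 1
      rw [pos_bridge hG' hiw', ← hq', hl]
      congr 1
      apply Finset.filter_congr
      intro k hk
      rw [Finset.mem_range] at hk
      exact ⟨fun h => (hagree k (le_of_lt hk)).1 h, fun h => (hagree k (le_of_lt hk)).2 h⟩
    · intro hmem
      exact absurd (Finset.mem_range.1 (Finset.mem_filter.1 hmem).1) (lt_irrefl _)
    · refine (hagree q' le_rfl).2 ?_
      rw [← hl]; exact ⟨w', hiw', rfl, rfl⟩
  have hTsub : T ⊆ (Finset.range q).filter (fun k => VOccurs S G i k (G.label w)) := by
    intro k hk
    rw [hT, Finset.mem_filter, Finset.mem_range] at hk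
    exact Finset.mem_filter.2 ⟨Finset.mem_range.2 (lt_of_lt_of_le hk.1 hlt), hk.2⟩
  have := Finset.card_le_card hTsub
  rw [hTcard, ← pos_bridge hG hiw, hp] at this
  omega

lemma ext_pos_det {i : Fin n} {w : G.V} (hiw : i ∈ S (G.label w)) {w' : G'.V}
    (hl : G'.label w' = G.label w) (hp : G'.pos w' = G.pos w) :
    vcount S G' i w' = vcount S G i w := by
  have h1 := ext_pos_det_aux hG hG' hc hiw hl hp
  have hiw' : i ∈ S (G'.label w') := by rw [hl]; exact hiw
  have h2 := ext_pos_det_aux hG' hG (consistent_symm hc) hiw' (by rw [hl]) (by rw [hp])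
  omega

/-- KEY: edges transfer to consistent WDs containing the target extended label -/
lemma key {v w : G.V} (he : G.edge v w) {w' : G'.V}
    (hl : G'.label w' = G.label w) (hp : G'.pos w' = G.pos w) :
    ∃ v' : G'.V, G'.label v' = G.label v ∧ G'.pos v' = G.pos v ∧ G'.edge v' w' := by
  obtain ⟨i, hi⟩ := hG.2.1 v w he
  rw [Finset.mem_inter] at hi
  have hvt : v ∈ tvar S G i := Finset.mem_filter.2 ⟨Finset.mem_univ _, hi.1⟩
  have hwt : w ∈ tvar S G i := Finset.mem_filter.2 ⟨Finset.mem_univ _, hi.2⟩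
  have hiw' : i ∈ S (G'.label w') := by rw [hl]; exact hi.2
  have hwt' : w' ∈ tvar S G' i := Finset.mem_filter.2 ⟨Finset.mem_univ _, hiw'⟩
  have hpq : vcount S G i v < vcount S G i w :=
    vcount_lt_of_transgen hG hvt hwt (Relation.TransGen.single he)
  have hq : vcount S G' i w' = vcount S G i w := ext_pos_det hG hG' hc hi.2 hl hp
  have hplen : vcount S G i v < lenI S G' i := by
    rw [← hq] at hpq
    exact lt_trans hpq (vcount_lt_lenI hG' hiw')
  obtain ⟨b', hb'⟩ := voccurs_exists hG' hplen
  obtain ⟨v', hiv', hcv', _⟩ := hb'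
  obtain ⟨hlab, hpos⟩ := cross_node hG hG' hc hi.1 hiv' hcv'
  refine ⟨v', hlab, hpos, ?_⟩
  have hvt' : v' ∈ tvar S G' i := Finset.mem_filter.2 ⟨Finset.mem_univ _, hiv'⟩
  have htg : Relation.TransGen G'.edge v' w' :=
    transgen_of_vcount_lt hG' hvt' hwt' (by rw [hcv', hq]; exact hpq)
  have hne : v' ≠ w' := by
    intro h; rw [h] at htg; exact hG'.1 w' htg
  have hdep : Dep S (G'.label v') (G'.label w') := by
    rw [hlab, hl]
    exact ⟨i, Finset.mem_inter.2 hi⟩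
  rcases hG'.2.2 v' w' hne hdep with h | h
  · exact h
  · exact absurd (htg.trans (Relation.TransGen.single h)) (hG'.1 v')

end Pair
end LGraph



namespace LGraph
open Aux

variable {n : ℕ} {E : Type} {S : E → Finset (Fin n)}

noncomputable def ordG (G : LGraph E) : G.V → ℕ := fun v => (Fintype.equivFin G.V v : ℕ)

lemma ordG_inj (G : LGraph E) : Function.Injective (ordG G) := fun u v h =>
  (Fintype.equivFin G.V).injective (Fin.val_injective h)

/-- auxiliary strict order on the label class of b -/
def rrel (S : E → Finset (Fin n)) (G : LGraph E) (b : E) (u v : G.V) : Prop :=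
  Relation.TransGen G.edge u v ∨ (¬ (S b).Nonempty ∧ ordG G u < ordG G v)

section RK
variable {G : LGraph E} (hG : G.IsWDag S)

include hG in
lemma no_edge_of_empty {u x : G.V} (hb : ¬ (S (G.label u)).Nonempty) : ¬ G.edge u x := by
  intro h
  obtain ⟨i, hi⟩ := hG.2.1 u x h
  exact hb ⟨i, (Finset.mem_inter.1 hi).1⟩

include hG in
lemma no_transgen_of_empty {u x : G.V} (hb : ¬ (S (G.label u)).Nonempty) :
    ¬ Relation.TransGen G.edge u x := by
  intro h
  obtain ⟨c, h', _⟩ := (Relation.TransGen.head'_iff).1 h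
  exact no_edge_of_empty hG hb h'

include hG in
lemma rrel_trans {b : E} : ∀ a ∈ tlab G b, ∀ a' ∈ tlab G b, ∀ a'' ∈ tlab G b,
    rrel S G b a a' → rrel S G b a' a'' → rrel S G b a a'' := by
  intro a ha a' ha' a'' _ h1 h2
  rw [tlab, Finset.mem_filter] at ha ha' 
  rcases h1 with h1 | h1
  · rcases h2 with h2 | h2
    · exact Or.inl (h1.trans h2)
    · exact absurd h1 (no_transgen_of_empty hG (by rw [ha.2]; exact h2.1))
  · rcases h2 with h2 | h2
    · exact absurd h2 (no_transgen_of_empty hG (by rw [ha'.2]; exact h1.1))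
    · exact Or.inr ⟨h1.1, lt_trans h1.2 h2.2⟩

include hG in
lemma rrel_irrefl {b : E} : ∀ a ∈ tlab G b, ¬ rrel S G b a a := by
  rintro a _ (h | h)
  · exact hG.1 a h
  · exact lt_irrefl _ h.2

include hG in
lemma rrel_total {b : E} : ∀ a ∈ tlab G b, ∀ a' ∈ tlab G b, a ≠ a' →
    rrel S G b a a' ∨ rrel S G b a' a := by
  intro a ha a' ha' hne
  by_cases hb : (S b).Nonempty
  · rcases hto_tlab hG hb a ha a' ha' hne with h | h
    · exact Or.inl (Or.inl h)
    · exact Or.inr (Or.inl h)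
  · have : ordG G a ≠ ordG G a' := fun h => hne (ordG_inj G h)
    rcases this.lt_or_gt with h | h
    · exact Or.inl (Or.inr ⟨hb, h⟩)
    · exact Or.inr (Or.inr ⟨hb, h⟩)

end RK

/-- uniform rank within the label class -/
noncomputable def rk (S : E → Finset (Fin n)) (G : LGraph E) (v : G.V) : ℕ :=
  rnkF (tlab G (G.label v)) (rrel S G (G.label v)) v

lemma mem_tlab_self {G : LGraph E} (v : G.V) : v ∈ tlab G (G.label v) :=
  Finset.mem_filter.2 ⟨Finset.mem_univ _, rfl⟩

lemma rk_eq_pos {G : LGraph E} (hG : G.IsWDag S) {v : G.V}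
    (hb : (S (G.label v)).Nonempty) : rk S G v = G.pos v := by
  rw [rk, pos_eq]
  unfold rnkF
  congr 1
  apply Finset.filter_congr
  intro u _
  simp only [rrel, hb, not_true_eq_false, false_and, or_false]

lemma rk_inj {G : LGraph E} (hG : G.IsWDag S) {u v : G.V}
    (hl : G.label u = G.label v) (h : rk S G u = rk S G v) : u = v := by
  rw [rk, rk, hl] at h
  exact rnkF_inj (rrel_trans hG) (rrel_irrefl hG) (rrel_total hG)
    (hl ▸ mem_tlab_self u) (mem_tlab_self v) h

lemma pos_inj {G : LGraph E} (hG : G.IsWDag S) {u v : G.V}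
    (hl : G.label u = G.label v) (hb : (S (G.label v)).Nonempty)
    (h : G.pos u = G.pos v) : u = v := by
  apply rk_inj hG hl
  rw [rk_eq_pos hG (hl ▸ hb), rk_eq_pos hG hb, h]

lemma rk_lt_card {G : LGraph E} (hG : G.IsWDag S) (v : G.V) :
    rk S G v < (tlab G (G.label v)).card :=
  rnkF_lt_card (rrel_irrefl hG) (mem_tlab_self v)

lemma exists_rk {G : LGraph E} (hG : G.IsWDag S) {b : E} {k : ℕ}
    (hk : k < (tlab G b).card) : ∃ v : G.V, G.label v = b ∧ rk S G v = k := by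
  obtain ⟨v, hv, hrv⟩ := exists_rnkF (rrel_trans hG (b := b)) (rrel_irrefl hG) (rrel_total hG) hk
  have hl : G.label v = b := (Finset.mem_filter.1 hv).2
  refine ⟨v, hl, ?_⟩
  rw [rk, hl]
  exact hrv

lemma pos_lt_of_transgen {G : LGraph E} (hG : G.IsWDag S) {u v : G.V}
    (hl : G.label u = G.label v) (h : Relation.TransGen G.edge u v) :
    G.pos u < G.pos v := by
  rw [pos_eq, pos_eq, hl]
  exact rnkF_lt_of (htr_any _) (hir_any hG _) (hl ▸ mem_tlab_self u) (mem_tlab_self v) h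

end LGraph



namespace LGraph
open Aux

variable {n : ℕ} {E : Type} {S : E → Finset (Fin n)}

lemma dep_nonempty {b b' : E} (h : Dep S b b') : (S b).Nonempty ∧ (S b').Nonempty := by
  obtain ⟨i, hi⟩ := h
  rw [Finset.mem_inter] at hi
  exact ⟨⟨i, hi.1⟩, ⟨i, hi.2⟩⟩

section Pair2
variable {G G' : LGraph E} (hG : G.IsWDag S) (hG' : G'.IsWDag S)
  (hc : Consistent S G G')

include hG hG' hc

/-- KEY variant: an i-node of G strictly i-before an i-node of G' yields a
matching edge inside G'. -/
lemma key2 {i : Fin n} {v : G.V} (hiv : i ∈ S (G.label v)) {w' : G'.V}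
    (hiw' : i ∈ S (G'.label w')) (hlt : vcount S G i v < vcount S G' i w') :
    ∃ v' : G'.V, G'.label v' = G.label v ∧ G'.pos v' = G.pos v ∧ G'.edge v' w' := by
  have hwt' : w' ∈ tvar S G' i := Finset.mem_filter.2 ⟨Finset.mem_univ _, hiw'⟩
  have hplen : vcount S G i v < lenI S G' i := lt_trans hlt (vcount_lt_lenI hG' hiw')
  obtain ⟨b', hb'⟩ := voccurs_exists hG' hplen
  obtain ⟨v', hiv', hcv', _⟩ := hb'
  obtain ⟨hlab, hpos⟩ := cross_node hG hG' hc hiv hiv' hcv'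
  refine ⟨v', hlab, hpos, ?_⟩
  have hvt' : v' ∈ tvar S G' i := Finset.mem_filter.2 ⟨Finset.mem_univ _, hiv'⟩
  have htg : Relation.TransGen G'.edge v' w' :=
    transgen_of_vcount_lt hG' hvt' hwt' (by rw [hcv']; exact hlt)
  have hne : v' ≠ w' := by
    intro h; rw [h] at htg; exact hG'.1 w' htg
  have hdep : Dep S (G'.label v') (G'.label w') := by
    rw [hlab]
    exact ⟨i, Finset.mem_inter.2 ⟨hiv, hiw'⟩⟩
  rcases hG'.2.2 v' w' hne hdep with h | h
  · exact h
  · exact absurd (htg.trans (Relation.TransGen.single h)) (hG'.1 v')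

end Pair2

/-- The merge of a family of witness DAGs: one node for each pair (label, rank)
realized in some member. -/
noncomputable def bigM (S : E → Finset (Fin n)) {l : ℕ} (G : Fin l → LGraph E) :
    LGraph E where
  V := {bk : E × ℕ // ∃ (j : Fin l) (v : (G j).V), (G j).label v = bk.1 ∧ rk S (G j) v = bk.2}
  fin := by
    have hsub : {bk : E × ℕ | ∃ (j : Fin l) (v : (G j).V),
        (G j).label v = bk.1 ∧ rk S (G j) v = bk.2} ⊆
        ⋃ j, Set.range (fun v : (G j).V => ((G j).label v, rk S (G j) v)) := by
      rintro bk ⟨j, v, h1, h2⟩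
      exact Set.mem_iUnion.2 ⟨j, ⟨v, by simp [h1, h2, Prod.ext_iff]⟩⟩
    exact ((Set.Finite.subset (Set.finite_iUnion (fun j => Set.finite_range _)) hsub)).fintype
  label := fun bk => bk.1.1
  edge := fun a b => ∃ (j : Fin l) (v w : (G j).V), (G j).label v = a.1.1 ∧ rk S (G j) v = a.1.2 ∧
    (G j).label w = b.1.1 ∧ rk S (G j) w = b.1.2 ∧ (G j).edge v w

section Merge
variable {l : ℕ} {G : Fin l → LGraph E} (hG : ∀ j, (G j).IsWDag S)
  (hc : ∀ j k, Consistent S (G j) (G k))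

include hG

lemma bigM_edge_unfold {x y : (bigM S G).V} (h : (bigM S G).edge x y) :
    ∃ (j : Fin l) (v w : (G j).V), (G j).HasExt v x.1 ∧ (G j).HasExt w y.1 ∧ (G j).edge v w := by
  obtain ⟨j, v, w, h1, h2, h3, h4, h5⟩ := h
  have hdep := (hG j).2.1 v w h5
  have hbv := (dep_nonempty hdep).1
  have hbw := (dep_nonempty hdep).2
  exact ⟨j, v, w, ⟨h1, by rw [← rk_eq_pos (hG j) hbv]; exact h2⟩,
    ⟨h3, by rw [← rk_eq_pos (hG j) hbw]; exact h4⟩, h5⟩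

lemma bigM_edge_dep {x y : (bigM S G).V} (h : (bigM S G).edge x y) :
    Dep S x.1.1 y.1.1 := by
  obtain ⟨j, v, w, hv, hw, hvw⟩ := bigM_edge_unfold hG h
  have := (hG j).2.1 v w hvw
  rwa [hv.1, hw.1] at this

include hc

lemma bigM_key {x y : (bigM S G).V} (h : (bigM S G).edge x y) (j : Fin l)
    (w' : (G j).V) (hw' : (G j).HasExt w' y.1) :
    ∃ v', (G j).HasExt v' x.1 ∧ (G j).edge v' w' := by
  obtain ⟨m, v, w, hv, hw, hvw⟩ := bigM_edge_unfold hG h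
  have hl : (G j).label w' = (G m).label w := by rw [hw'.1, hw.1]
  have hp : (G j).pos w' = (G m).pos w := by rw [hw'.2, hw.2]
  obtain ⟨v', h1, h2, h3⟩ := key (hG m) (hG j) (hc m j) hvw hl hp
  exact ⟨v', ⟨by rw [h1, hv.1], by rw [h2, hv.2]⟩, h3⟩

lemma bigM_pathback {x y : (bigM S G).V}
    (h : Relation.TransGen (bigM S G).edge x y) (j : Fin l) (w : (G j).V)
    (hw : (G j).HasExt w y.1) :
    ∃ v, (G j).HasExt v x.1 ∧ Relation.TransGen (G j).edge v w := by
  induction h generalizing w with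
  | single h =>
    obtain ⟨v', h1, h2⟩ := bigM_key hG hc h j w hw
    exact ⟨v', h1, Relation.TransGen.single h2⟩
  | tail _ e ih =>
    obtain ⟨v₁, h1, h2⟩ := bigM_key hG hc e j w hw
    obtain ⟨v, hv, htg⟩ := ih v₁ h1
    exact ⟨v, hv, htg.trans (Relation.TransGen.single h2)⟩

lemma bigM_acyclic (x : (bigM S G).V) : ¬ Relation.TransGen (bigM S G).edge x x := by
  intro hx
  obtain ⟨z, he, _⟩ := (Relation.TransGen.head'_iff).1 hx
  obtain ⟨m, v, w, hv, hw, hvw⟩ := bigM_edge_unfold hG he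
  obtain ⟨v₀, hv₀, htg⟩ := bigM_pathback hG hc hx m v hv
  have hb : (S ((G m).label v)).Nonempty := (dep_nonempty ((hG m).2.1 v w hvw)).1
  have hlab : (G m).label v₀ = (G m).label v := by rw [hv₀.1, hv.1]
  have : v₀ = v := pos_inj (hG m) hlab hb (by rw [hv₀.2, hv.2])
  rw [this] at htg
  exact (hG m).1 v htg

lemma bigM_total (x y : (bigM S G).V) (hne : x ≠ y) (hdep : Dep S x.1.1 y.1.1) :
    (bigM S G).edge x y ∨ (bigM S G).edge y x := by
  obtain ⟨i, hi⟩ := hdep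
  rw [Finset.mem_inter] at hi
  obtain ⟨j, v, hlv, hrv⟩ := x.2
  obtain ⟨j', w, hlw, hrw⟩ := y.2
  have hiv : i ∈ S ((G j).label v) := by rw [hlv]; exact hi.1
  have hiw : i ∈ S ((G j').label w) := by rw [hlw]; exact hi.2
  have hpv : (G j).pos v = x.1.2 := by rw [← rk_eq_pos (hG j) ⟨i, hiv⟩]; exact hrv
  have hpw : (G j').pos w = y.1.2 := by rw [← rk_eq_pos (hG j') ⟨i, hiw⟩]; exact hrw
  rcases lt_trichotomy (vcount S (G j) i v) (vcount S (G j') i w) with h | h | h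
  · left
    obtain ⟨v'', h1, h2, h3⟩ := key2 (hG j) (hG j') (hc j j') hiv hiw h
    refine ⟨j', v'', w, ?_, ?_, hlw, hrw, h3⟩
    · rw [h1, hlv]
    · rw [rk_eq_pos (hG j') (by rw [h1]; exact ⟨i, hiv⟩), h2, hpv]
  · exfalso
    obtain ⟨h1, h2⟩ := cross_node (hG j) (hG j') (hc j j') hiv hiw h.symm
    apply hne
    apply Subtype.ext
    apply Prod.ext
    · rw [← hlv, ← hlw, h1]
    · rw [← hpv, ← hpw, h2]
  · right
    obtain ⟨w'', h1, h2, h3⟩ := key2 (hG j') (hG j) (hc j' j) hiw hiv h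
    refine ⟨j, w'', v, ?_, ?_, hlv, hrv, h3⟩
    · rw [h1, hlw]
    · rw [rk_eq_pos (hG j) (by rw [h1]; exact ⟨i, hiw⟩), h2, hpw]

lemma bigM_isWDag : (bigM S G).IsWDag S :=
  ⟨bigM_acyclic hG hc, fun _ _ h => bigM_edge_dep hG h, bigM_total hG hc⟩

/-- the canonical embedding of a member into the merge -/
noncomputable def bigMemb (S : E → Finset (Fin n)) {l : ℕ} {G : Fin l → LGraph E} (j : Fin l) (v : (G j).V) : (bigM S G).V :=
  ⟨((G j).label v, rk S (G j) v), j, v, rfl, rfl⟩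

omit hG hc in
lemma bigMemb_inj (j : Fin l) {v w : (G j).V} (hGj : (G j).IsWDag S)
    (h : bigMemb S j v = bigMemb S j w) : v = w := by
  have h1 : (G j).label v = (G j).label w := congrArg (fun x => x.1.1) h
  have h2 : rk S (G j) v = rk S (G j) w := congrArg (fun x => x.1.2) h
  exact rk_inj hGj h1 h2

include hc

lemma bigM_edge_into_range {j : Fin l} {x : (bigM S G).V} {w : (G j).V}
    (h : (bigM S G).edge x (bigMemb S j w)) :
    ∃ v' : (G j).V, bigMemb S j v' = x ∧ (G j).edge v' w := by
  have hdep := bigM_edge_dep hG h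
  have hbx : (S x.1.1).Nonempty := (dep_nonempty hdep).1
  have hbw : (S ((G j).label w)).Nonempty := (dep_nonempty hdep).2
  have hw : (G j).HasExt w (bigMemb S j w).1 :=
    ⟨rfl, (rk_eq_pos (hG j) hbw).symm⟩
  obtain ⟨v', hv', hedge⟩ := bigM_key hG hc h j w hw
  refine ⟨v', ?_, hedge⟩
  apply Subtype.ext
  apply Prod.ext
  · exact hv'.1
  · rw [← hv'.2]
    exact rk_eq_pos (hG j) (by rw [hv'.1]; exact hbx)

lemma bigM_range_closed (j : Fin l) :
    (bigM S G).ReachSet (Set.range (bigMemb S j)) = Set.range (bigMemb S j) := by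
  apply Set.Subset.antisymm
  · rintro u ⟨y, hy, hrt⟩
    induction hrt using Relation.ReflTransGen.head_induction_on with
    | refl => exact hy
    | head e _ ih =>
      obtain ⟨w, rfl⟩ := ih
      obtain ⟨v', hv', _⟩ := bigM_edge_into_range hG hc e
      exact ⟨v', hv'⟩
  · intro u hu
    exact ⟨u, hu, Relation.ReflTransGen.refl⟩

lemma bigM_prefix (j : Fin l) : (G j).IsPrefix (bigM S G) := by
  refine ⟨Set.range (bigMemb S j), ?_⟩
  set H := bigM S G with hH
  set R := H.ReachSet (Set.range (bigMemb S j)) with hR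
  have hRr : R = Set.range (bigMemb S j) := bigM_range_closed hG hc j
  have hmem : ∀ v : (G j).V, bigMemb S j v ∈ R := by
    intro v
    rw [hRr]
    exact ⟨v, rfl⟩
  set f : (G j).V → (H.induce R).V := fun v => ⟨bigMemb S j v, hmem v⟩ with hf
  have hbij : Function.Bijective f := by
    constructor
    · intro a b hab
      exact bigMemb_inj j (hG j) (congrArg Subtype.val hab)
    · intro u
      have : u.1 ∈ Set.range (bigMemb S j) := hRr ▸ u.2
      obtain ⟨v, hv⟩ := this
      exact ⟨v, Subtype.ext hv⟩
  refine ⟨Equiv.ofBijective f hbij, fun v => rfl, ?_⟩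
  intro v w
  constructor
  · intro h
    have h' : H.edge (bigMemb S j v) (bigMemb S j w) := h
    obtain ⟨v', hv', hedge⟩ := bigM_edge_into_range hG hc h'
    rwa [← bigMemb_inj j (hG j) hv']
  · intro h
    exact ⟨j, v, w, rfl, rfl, rfl, rfl, h⟩

end Merge
end LGraph



namespace LGraph
open Aux

variable {n : ℕ} {E : Type} {S : E → Finset (Fin n)}

lemma reach_closed {H : LGraph E} {s : Set H.V} {u v : H.V} (h : H.edge u v)
    (hv : v ∈ H.ReachSet s) : u ∈ H.ReachSet s := by
  obtain ⟨y, hy, hrt⟩ := hv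
  exact ⟨y, hy, hrt.head h⟩

lemma mem_reach_of_transgen {H : LGraph E} {s : Set H.V} {u v : H.V}
    (h : Relation.TransGen H.edge u v) (hv : v ∈ H.ReachSet s) :
    u ∈ H.ReachSet s := by
  induction h with
  | single h' => exact reach_closed h' hv
  | tail _ h' ih => exact ih (reach_closed h' hv)

lemma transgen_induce_val {H : LGraph E} {R : Set H.V}
    {a b : (H.induce R).V} (h : Relation.TransGen (H.induce R).edge a b) :
    Relation.TransGen H.edge a.1 b.1 :=
  Relation.TransGen.lift Subtype.val (fun _ _ h' => h') _ _ h

lemma transgen_induce_of {H : LGraph E} {s : Set H.V} {u : H.V}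
    {b : (H.induce (H.ReachSet s)).V} (h : Relation.TransGen H.edge u b.1) :
    ∃ hu : u ∈ H.ReachSet s,
      Relation.TransGen (H.induce (H.ReachSet s)).edge ⟨u, hu⟩ b := by
  induction h using Relation.TransGen.head_induction_on with
  | single h' =>
    exact ⟨reach_closed h' b.2, Relation.TransGen.single h'⟩
  | head h' _ ih' =>
    obtain ⟨hc', htg⟩ := ih'
    refine ⟨reach_closed h' hc', Relation.TransGen.head ?_ htg⟩
    exact h' 

lemma vcount_induce {H : LGraph E} {s : Set H.V} {i : Fin n}
    (v : (H.induce (H.ReachSet s)).V) :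
    vcount S (H.induce (H.ReachSet s)) i v = vcount S H i v.1 := by
  rw [vcount, vcount]
  apply Finset.card_bij (fun u _ => u.1)
  · intro u hu
    rw [Finset.mem_filter] at hu
    exact Finset.mem_filter.2 ⟨Finset.mem_univ _, hu.2.1, transgen_induce_val hu.2.2⟩
  · intro a ha b hb hab
    exact Subtype.ext hab
  · intro u hu
    rw [Finset.mem_filter] at hu
    obtain ⟨hmem, htg⟩ := transgen_induce_of (b := v) hu.2.2
    exact ⟨⟨u, hmem⟩, Finset.mem_filter.2 ⟨Finset.mem_univ _, hu.2.1, htg⟩, rfl⟩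

section Iso
variable {G G₂ : LGraph E} (e : G.V ≃ G₂.V)
  (hl : ∀ v, G₂.label (e v) = G.label v)
  (he : ∀ v w, G₂.edge (e v) (e w) ↔ G.edge v w)

include he

lemma transgen_liso {u v : G.V} :
    Relation.TransGen G₂.edge (e u) (e v) ↔ Relation.TransGen G.edge u v := by
  constructor
  · intro h
    have h2 : Relation.TransGen G.edge (e.symm (e u)) (e.symm (e v)) := by
      refine Relation.TransGen.lift e.symm (fun a b h' => ?_) _ _ h
      show G.edge (e.symm a) (e.symm b)
      rw [← he (e.symm a) (e.symm b), e.apply_symm_apply, e.apply_symm_apply]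
      exact h'
    rwa [e.symm_apply_apply, e.symm_apply_apply] at h2
  · intro h
    exact Relation.TransGen.lift e (fun a b h' => (he a b).2 h') _ _ h

include hl

lemma vcount_liso {i : Fin n} (v : G.V) :
    vcount S G₂ i (e v) = vcount S G i v := by
  rw [vcount, vcount]
  apply Finset.card_bij (fun u _ => e.symm u)
  · intro u hu
    rw [Finset.mem_filter] at hu
    refine Finset.mem_filter.2 ⟨Finset.mem_univ _, ?_, ?_⟩
    · rw [← hl (e.symm u), e.apply_symm_apply]; exact hu.2.1
    · rw [← transgen_liso e he, e.apply_symm_apply]; exact hu.2.2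
  · intro a _ b _ hab
    exact e.symm.injective hab
  · intro u hu
    rw [Finset.mem_filter] at hu
    refine ⟨e u, Finset.mem_filter.2 ⟨Finset.mem_univ _, ?_, ?_⟩, by simp⟩
    · rw [hl]; exact hu.2.1
    · rw [transgen_liso e he]; exact hu.2.2

lemma voccurs_liso {i : Fin n} {k : ℕ} {b : E} :
    VOccurs S G i k b ↔ VOccurs S G₂ i k b := by
  constructor
  · rintro ⟨v, h1, h2, h3⟩
    exact ⟨e v, by rw [hl]; exact h1, by rw [vcount_liso e hl he]; exact h2,
      by rw [hl]; exact h3⟩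
  · rintro ⟨v, h1, h2, h3⟩
    have hlv : G₂.label v = G.label (e.symm v) := by
      rw [← hl (e.symm v), e.apply_symm_apply]
    refine ⟨e.symm v, ?_, ?_, ?_⟩
    · rw [← hlv]; exact h1
    · rw [← vcount_liso e hl he (e.symm v), e.apply_symm_apply]; exact h2
    · rw [← hlv]; exact h3

lemma lenI_liso {i : Fin n} : lenI S G i = lenI S G₂ i := by
  rw [lenI, lenI, tvar, tvar]
  apply Finset.card_bij (fun u _ => e u)
  · intro u hu
    rw [Finset.mem_filter] at hu
    exact Finset.mem_filter.2 ⟨Finset.mem_univ _, by rw [hl]; exact hu.2⟩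
  · intro a _ b _ hab
    exact e.injective hab
  · intro u hu
    rw [Finset.mem_filter] at hu
    refine ⟨e.symm u, Finset.mem_filter.2 ⟨Finset.mem_univ _, ?_⟩, by simp⟩
    have hlv : G₂.label u = G.label (e.symm u) := by
      rw [← hl (e.symm u), e.apply_symm_apply]
    rw [← hlv]
    exact hu.2

end Iso

lemma finset_nat_down {T : Finset ℕ} (h : ∀ a ∈ T, ∀ m, m < a → m ∈ T) :
    T = Finset.range T.card := by
  have hsub : T ⊆ Finset.range T.card := by
    intro a ha
    rw [Finset.mem_range]
    have : Finset.range (a + 1) ⊆ T := by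
      intro m hm
      rw [Finset.mem_range] at hm
      rcases Nat.lt_succ_iff_lt_or_eq.1 hm with h' | h'
      · exact h a ha m h'
      · rw [h']; exact ha
    have := Finset.card_le_card this
    rw [Finset.card_range] at this
    omega
  exact Finset.eq_of_subset_of_card_le hsub (by rw [Finset.card_range])

lemma prefix_voccurs_up {G H : LGraph E} (hp : G.IsPrefix H) {i : Fin n} {k : ℕ}
    {b : E} (h : VOccurs S G i k b) : VOccurs S H i k b := by
  obtain ⟨s, e, hl, he⟩ := hp
  rw [voccurs_liso e hl he] at h
  obtain ⟨v, h1, h2, h3⟩ := h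
  exact ⟨v.1, h1, by rw [← vcount_induce v]; exact h2, h3⟩

lemma prefix_voccurs_down {G H : LGraph E} (hH : H.IsWDag S) (hp : G.IsPrefix H)
    {i : Fin n} {k : ℕ} {b : E} (hk : k < lenI S G i) (h : VOccurs S H i k b) :
    VOccurs S G i k b := by
  obtain ⟨s, e, hl, he⟩ := hp
  set A : Finset H.V := (tvar S H i).filter (fun u => u ∈ H.ReachSet s) with hA
  have hAcard : A.card = lenI S G i := by
    rw [lenI_liso e hl he, lenI, tvar]
    symm
    apply Finset.card_bij (fun (u : (H.induce (H.ReachSet s)).V) _ => u.1)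
    · intro u hu
      rw [Finset.mem_filter] at hu
      exact Finset.mem_filter.2 ⟨Finset.mem_filter.2 ⟨Finset.mem_univ _, hu.2⟩, u.2⟩
    · intro a _ b _ hab
      exact Subtype.ext hab
    · intro u hu
      rw [hA, Finset.mem_filter] at hu
      exact ⟨⟨u, hu.2⟩, Finset.mem_filter.2
        ⟨Finset.mem_univ _, (Finset.mem_filter.1 hu.1).2⟩, rfl⟩
  set T : Finset ℕ := A.image (vcount S H i) with hT
  have hTcard : T.card = A.card := by
    rw [hT]
    apply Finset.card_image_of_injOn
    intro u hu u' hu' huu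
    rw [hA, Finset.mem_coe, Finset.mem_filter] at hu hu'
    exact vcount_node_inj hH hu.1 hu'.1 huu
  have hdown : ∀ a ∈ T, ∀ m, m < a → m ∈ T := by
    intro a ha m hm
    rw [hT, Finset.mem_image] at ha
    obtain ⟨u, hu, rfl⟩ := ha
    rw [hA, Finset.mem_filter] at hu
    have hiu : i ∈ S (H.label u) := (Finset.mem_filter.1 hu.1).2
    have hmlen : m < lenI S H i := lt_trans hm (vcount_lt_lenI hH hiu)
    obtain ⟨b0, hb0⟩ := voccurs_exists hH hmlen
    obtain ⟨u0, h1, h2, _⟩ := hb0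
    have hu0t : u0 ∈ tvar S H i := Finset.mem_filter.2 ⟨Finset.mem_univ _, h1⟩
    have htg : Relation.TransGen H.edge u0 u :=
      transgen_of_vcount_lt hH hu0t hu.1 (by rw [h2]; exact hm)
    rw [hT, Finset.mem_image]
    exact ⟨u0, by rw [hA, Finset.mem_filter]; exact ⟨hu0t, mem_reach_of_transgen htg hu.2⟩, h2⟩
  have hTr : T = Finset.range (lenI S G i) := by
    rw [finset_nat_down hdown, hTcard, hAcard]
  have hkT : k ∈ T := by
    rw [hTr, Finset.mem_range]; exact hk
  rw [hT, Finset.mem_image] at hkT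
  obtain ⟨u', hu', hku'⟩ := hkT
  obtain ⟨u, h1, h2, h3⟩ := h
  have hut : u ∈ tvar S H i := Finset.mem_filter.2 ⟨Finset.mem_univ _, h1⟩
  rw [hA, Finset.mem_filter] at hu'
  have : u = u' := vcount_node_inj hH hut hu'.1 (by rw [h2, hku'])
  have huR : u ∈ H.ReachSet s := this ▸ hu'.2
  rw [voccurs_liso e hl he]
  exact ⟨⟨u, huR⟩, h1, (vcount_induce (S := S) (i := i) (⟨u, huR⟩ : (H.induce (H.ReachSet s)).V)).trans h2, h3⟩

end LGraph


/-- Witness DAGs G₁, …, G_l are pairwise consistent iff there is a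
witness DAG H of which all of them are prefixes. -/
theorem stmt17 {n : ℕ} {E : Type} (S : E → Finset (Fin n))
    (l : ℕ) (G : Fin l → LGraph E) (hG : ∀ j, (G j).IsWDag S) :
    (∀ j k, LGraph.Consistent S (G j) (G k)) ↔
      ∃ H : LGraph E, H.IsWDag S ∧ ∀ j, (G j).IsPrefix H := by
  constructor
  · intro hc
    exact ⟨LGraph.bigM S G, LGraph.bigM_isWDag hG hc,
      fun j => LGraph.bigM_prefix hG hc j⟩
  · rintro ⟨H, hH, hpre⟩ j k i
    rcases le_or_gt (LGraph.lenI S (G j) i) (LGraph.lenI S (G k) i) with hle | hlt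
    · left
      intro k0 b h0
      have h1 : k0 < LGraph.lenI S (G j) i := LGraph.voccurs_lt_len (hG j) h0
      exact LGraph.prefix_voccurs_down hH (hpre k) (lt_of_lt_of_le h1 hle)
        (LGraph.prefix_voccurs_up (hpre j) h0)
    · right
      intro k0 b h0
      have h1 : k0 < LGraph.lenI S (G k) i := LGraph.voccurs_lt_len (hG k) h0
      exact LGraph.prefix_voccurs_down hH (hpre j) (lt_trans h1 hlt)
        (LGraph.prefix_voccurs_up (hpre k) h0)

end LLL
end

section
/- Let G_1, G_2 be consistent witness DAGs and let R be a resampling table. Then the merge G_1 ∨ G_2 is compatible with R if and only if both G_1 and G_2 are compatible with R. -/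
open scoped Classical

namespace LLL

section Aux

open LGraph Relation

variable {n : ℕ} {E : Type} {S : E → Finset (Fin n)}

lemma pos_lt {G : LGraph E} (h : G.IsWDag S) {u v : G.V}
    (hl : G.label u = G.label v) (ht : TransGen G.edge u v) : G.pos u < G.pos v := by
  apply Finset.card_lt_card
  rw [Finset.ssubset_iff_of_subset]
  · refine ⟨u, ?_, ?_⟩
    · simp only [Finset.mem_filter, Finset.mem_univ, true_and]
      exact ⟨hl, ht⟩
    · intro hc
      simp only [Finset.mem_filter, Finset.mem_univ, true_and] at hc
      first
        | exact h.1 u hc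
        | exact h.1 u hc.2
  · intro w hw
    simp only [Finset.mem_filter, Finset.mem_univ, true_and] at hw ⊢
    exact ⟨hw.1.trans hl, hw.2.trans ht⟩

lemma vcount_lt {G : LGraph E} (h : G.IsWDag S) {i : Fin n} {u v : G.V}
    (hiu : i ∈ S (G.label u)) (ht : TransGen G.edge u v) :
    vcount S G i u < vcount S G i v := by
  apply Finset.card_lt_card
  rw [Finset.ssubset_iff_of_subset]
  · refine ⟨u, ?_, ?_⟩
    · simp only [Finset.mem_filter, Finset.mem_univ, true_and]
      exact ⟨hiu, ht⟩
    · intro hc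
      simp only [Finset.mem_filter, Finset.mem_univ, true_and] at hc
      first
        | exact h.1 u hc
        | exact h.1 u hc.2
  · intro w hw
    simp only [Finset.mem_filter, Finset.mem_univ, true_and] at hw ⊢
    exact ⟨hw.1, hw.2.trans ht⟩

lemma total_i {G : LGraph E} (h : G.IsWDag S) {i : Fin n} {u v : G.V}
    (hiu : i ∈ S (G.label u)) (hiv : i ∈ S (G.label v)) (hne : u ≠ v) :
    TransGen G.edge u v ∨ TransGen G.edge v u := by
  rcases h.2.2 u v hne ⟨i, Finset.mem_inter.2 ⟨hiu, hiv⟩⟩ with he | he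
  · exact Or.inl (TransGen.single he)
  · exact Or.inr (TransGen.single he)

lemma vcount_inj {G : LGraph E} (h : G.IsWDag S) {i : Fin n} {u v : G.V}
    (hiu : i ∈ S (G.label u)) (hiv : i ∈ S (G.label v))
    (heq : vcount S G i u = vcount S G i v) : u = v := by
  by_contra hne
  rcases total_i h hiu hiv hne with ht | ht
  · exact absurd heq (Nat.ne_of_lt (vcount_lt h hiu ht))
  · exact absurd heq.symm (Nat.ne_of_lt (vcount_lt h hiv ht))

lemma transGen_of_vcount_lt {G : LGraph E} (h : G.IsWDag S) {i : Fin n} {u v : G.V}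
    (hiu : i ∈ S (G.label u)) (hiv : i ∈ S (G.label v))
    (hlt : vcount S G i u < vcount S G i v) : TransGen G.edge u v := by
  rcases total_i h hiu hiv (fun he => absurd hlt (by simp [he])) with ht | ht
  · exact ht
  · exact absurd hlt (Nat.not_lt.2 (Nat.le_of_lt (vcount_lt h hiv ht)))

lemma exists_vcount {G : LGraph E} (h : G.IsWDag S) {i : Fin n} {v : G.V} {k : ℕ}
    (hk : k < vcount S G i v) :
    ∃ w : G.V, i ∈ S (G.label w) ∧ vcount S G i w = k := by
  classical
  set T := Finset.univ.filter fun u : G.V => i ∈ S (G.label u) ∧ TransGen G.edge u v with hT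
  have hcard : T.card = vcount S G i v := rfl
  have himg : T.image (vcount S G i) = Finset.range (vcount S G i v) := by
    apply Finset.eq_of_subset_of_card_le
    · intro k' hk'
      rcases Finset.mem_image.1 hk' with ⟨u, hu, huk⟩
      simp only [hT, Finset.mem_filter, Finset.mem_univ, true_and] at hu
      exact Finset.mem_range.2 (huk ▸ vcount_lt h hu.1 hu.2)
    · have hinj : Set.InjOn (vcount S G i) ↑T := by
        intro u hu u' hu' heq
        simp only [hT, Finset.coe_filter, Finset.mem_univ, true_and,
          Set.mem_setOf_eq] at hu hu'
        exact vcount_inj h hu.1 hu'.1 heq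
      rw [Finset.card_range, ← hcard, Finset.card_image_of_injOn hinj]
  have : k ∈ T.image (vcount S G i) := himg ▸ Finset.mem_range.2 hk
  rcases Finset.mem_image.1 this with ⟨u, hu, huk⟩
  simp only [hT, Finset.mem_filter, Finset.mem_univ, true_and] at hu
  exact ⟨u, hu.1, huk⟩

lemma voccurs_unique {G : LGraph E} (h : G.IsWDag S) {i : Fin n} {k : ℕ} {b b' : E}
    (hb : VOccurs S G i k b) (hb' : VOccurs S G i k b') : b = b' := by
  obtain ⟨v, hiv, hvk, hvb⟩ := hb
  obtain ⟨v', hiv', hvk', hvb'⟩ := hb'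
  rw [← hvb, ← hvb']
  rw [vcount_inj h hiv hiv' (hvk.trans hvk'.symm)]

lemma pos_eq_card {G : LGraph E} (h : G.IsWDag S) {i : Fin n} {v : G.V}
    (hiv : i ∈ S (G.label v)) :
    G.pos v =
      ((Finset.range (vcount S G i v)).filter fun k => VOccurs S G i k (G.label v)).card := by
  classical
  apply Finset.card_bij (fun u _ => vcount S G i u)
  · intro u hu
    simp only [Finset.mem_filter, Finset.mem_univ, true_and] at hu
    have hiu : i ∈ S (G.label u) := hu.1 ▸ hiv
    exact Finset.mem_filter.2 ⟨Finset.mem_range.2 (vcount_lt h hiu hu.2), u, hiu, rfl, hu.1⟩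
  · intro u hu u' hu' heq
    simp only [Finset.mem_filter, Finset.mem_univ, true_and] at hu hu'
    exact vcount_inj h (hu.1 ▸ hiv) (hu'.1 ▸ hiv) heq
  · intro k hk
    simp only [Finset.mem_filter, Finset.mem_range] at hk
    obtain ⟨w, hiw, hwc, hwl⟩ := hk.2
    refine ⟨w, Finset.mem_filter.2 ⟨Finset.mem_univ _, hwl, ?_⟩, hwc⟩
    exact transGen_of_vcount_lt h hiw hiv (by rw [hwc]; exact hk.1)

lemma voccurs_agree {G G' : LGraph E} (h : G.IsWDag S) (h' : G'.IsWDag S) {i : Fin n}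
    (hi : InitSeg S G G' i ∨ InitSeg S G' G i) {k : ℕ} {b b' : E}
    (hb : VOccurs S G i k b) (hb' : VOccurs S G' i k b') : b = b' := by
  rcases hi with hseg | hseg
  · exact voccurs_unique h' (hseg k b hb) hb'
  · exact voccurs_unique h hb (hseg k b' hb')

lemma pos_lt_pos {G G' : LGraph E} (h : G.IsWDag S) (h' : G'.IsWDag S) {i : Fin n}
    (hi : InitSeg S G G' i ∨ InitSeg S G' G i) {v : G.V} {y : G'.V}
    (hl : G'.label y = G.label v) (hiv : i ∈ S (G.label v))
    (hlt : vcount S G i v < vcount S G' i y) : G.pos v < G'.pos y := by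
  have hiy : i ∈ S (G'.label y) := hl ▸ hiv
  rw [pos_eq_card h hiv, pos_eq_card h' hiy, hl]
  have htr : ∀ k, k < vcount S G' i y → VOccurs S G i k (G.label v) →
      VOccurs S G' i k (G.label v) := by
    intro k hk hb
    obtain ⟨w, hiw, hwk⟩ := exists_vcount h' hk
    have heq : G.label v = G'.label w := voccurs_agree h h' hi hb ⟨w, hiw, hwk, rfl⟩
    exact ⟨w, hiw, hwk, heq.symm⟩
  apply Finset.card_lt_card
  rw [Finset.ssubset_iff_of_subset]
  · refine ⟨vcount S G i v, ?_, ?_⟩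
    · refine Finset.mem_filter.2 ⟨Finset.mem_range.2 hlt, htr _ hlt ⟨v, hiv, rfl, rfl⟩⟩
    · intro hc
      exact absurd (Finset.mem_range.1 (Finset.mem_filter.1 hc).1) (lt_irrefl _)
  · intro k hk
    rcases Finset.mem_filter.1 hk with ⟨hk1, hk2⟩
    have hk1' := Finset.mem_range.1 hk1
    exact Finset.mem_filter.2 ⟨Finset.mem_range.2 (hk1'.trans hlt), htr _ (hk1'.trans hlt) hk2⟩

lemma vcount_eq_of_ext {G G' : LGraph E} (h : G.IsWDag S) (h' : G'.IsWDag S) {i : Fin n}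
    (hi : InitSeg S G G' i ∨ InitSeg S G' G i) {v : G.V} {y : G'.V}
    (hl : G'.label y = G.label v) (hp : G'.pos y = G.pos v) (hiv : i ∈ S (G.label v)) :
    vcount S G i v = vcount S G' i y := by
  rcases lt_trichotomy (vcount S G i v) (vcount S G' i y) with hlt | heq | hlt
  · exact absurd hp (Nat.ne_of_gt (pos_lt_pos h h' hi hl hiv hlt))
  · exact heq
  · exact absurd hp (Nat.ne_of_lt (pos_lt_pos h' h hi.symm hl.symm (hl ▸ hiv) hlt))

lemma pos_eq_of_vcount_eq {G G' : LGraph E} (h : G.IsWDag S) (h' : G'.IsWDag S) {i : Fin n}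
    (hi : InitSeg S G G' i ∨ InitSeg S G' G i) {v : G.V} {y : G'.V}
    (hl : G'.label y = G.label v) (hiv : i ∈ S (G.label v))
    (hvc : vcount S G i v = vcount S G' i y) : G.pos v = G'.pos y := by
  have hiy : i ∈ S (G'.label y) := hl ▸ hiv
  rw [pos_eq_card h hiv, pos_eq_card h' hiy, hl, ← hvc]
  congr 1
  apply Finset.filter_congr
  intro k hk
  have hk1 : k < vcount S G i v := Finset.mem_range.1 hk
  have hk2 : k < vcount S G' i y := hvc ▸ hk1
  obtain ⟨w, hiw, hwk⟩ := exists_vcount h hk1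
  obtain ⟨w', hiw', hwk'⟩ := exists_vcount h' hk2
  have hww : G.label w = G'.label w' :=
    voccurs_agree h h' hi ⟨w, hiw, hwk, rfl⟩ ⟨w', hiw', hwk', rfl⟩
  constructor
  · intro hb
    have := voccurs_unique h hb ⟨w, hiw, hwk, rfl⟩
    exact ⟨w', hiw', hwk', (hww ▸ this ▸ rfl : G'.label w' = G.label v)⟩
  · intro hb
    have := voccurs_unique h' hb ⟨w', hiw', hwk', rfl⟩
    exact ⟨w, hiw, hwk, (hww ▸ this ▸ rfl : G.label w = G.label v)⟩


lemma step_abstract {G G' : LGraph E} (h : G.IsWDag S) (h' : G'.IsWDag S)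
    (hcons : ∀ i : Fin n, InitSeg S G G' i ∨ InitSeg S G' G i)
    (v : G.V) (c : E × ℕ)
    (hedge : (∃ x y, G.HasExt x c ∧ G.HasExt y (G.label v, G.pos v) ∧ G.edge x y) ∨
      (∃ x y, G'.HasExt x c ∧ G'.HasExt y (G.label v, G.pos v) ∧ G'.edge x y)) :
    ∃ w : G.V, G.HasExt w c ∧ G.edge w v := by
  rcases hedge with ⟨x, y, hx, hy, hxy⟩ | ⟨x, y, hx, hy, hxy⟩
  · obtain ⟨i, hi⟩ := h.2.1 x y hxy
    rw [Finset.mem_inter] at hi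
    have hly : G.label y = G.label v := hy.1
    have hpy : G.pos y = G.pos v := hy.2
    have hyv : y = v := by
      by_contra hne
      have hiy : i ∈ S (G.label y) := hi.2
      have hiv : i ∈ S (G.label v) := hly ▸ hi.2
      rcases total_i h hiy hiv hne with ht | ht
      · exact absurd hpy (Nat.ne_of_lt (pos_lt h hly ht))
      · exact absurd hpy.symm (Nat.ne_of_lt (pos_lt h hly.symm ht))
    exact ⟨x, hx, hyv ▸ hxy⟩
  · obtain ⟨i, hi⟩ := h'.2.1 x y hxy
    rw [Finset.mem_inter] at hi
    have hly : G'.label y = G.label v := hy.1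
    have hiv : i ∈ S (G.label v) := hly ▸ hi.2
    have hvy : vcount S G i v = vcount S G' i y :=
      vcount_eq_of_ext h h' (hcons i) hly hy.2 hiv
    have hkx : vcount S G' i x < vcount S G' i y :=
      vcount_lt h' hi.1 (Relation.TransGen.single hxy)
    have hklt : vcount S G' i x < vcount S G i v := hvy ▸ hkx
    obtain ⟨w, hiw, hwk⟩ := exists_vcount h hklt
    have hlw : G.label w = G'.label x :=
      voccurs_agree h h' (hcons i) ⟨w, hiw, hwk, rfl⟩ ⟨x, hi.1, rfl, rfl⟩
    have hpw : G.pos w = G'.pos x :=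
      pos_eq_of_vcount_eq h h' (hcons i) hlw.symm hiw hwk
    have hne : w ≠ v := by
      intro he
      rw [he] at hwk
      rw [← hwk] at hklt
      exact lt_irrefl _ hklt
    have hdep : Dep S (G.label w) (G.label v) := ⟨i, Finset.mem_inter.2 ⟨hiw, hiv⟩⟩
    rcases h.2.2 w v hne hdep with he | he
    · exact ⟨w, ⟨hlw.trans hx.1, hpw.trans hx.2⟩, he⟩
    · exfalso
      have hlt2 := vcount_lt h hiv (Relation.TransGen.single he)
      rw [hwk] at hlt2
      exact absurd hklt (Nat.lt_asymm hlt2)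

noncomputable def mvl (G₁ G₂ : LGraph E) (v : G₁.V) : (G₁.merge G₂).V :=
  ⟨(G₁.label v, G₁.pos v), Or.inl ⟨v, rfl, rfl⟩⟩

noncomputable def mvr (G₁ G₂ : LGraph E) (v : G₂.V) : (G₁.merge G₂).V :=
  ⟨(G₂.label v, G₂.pos v), Or.inr ⟨v, rfl, rfl⟩⟩

lemma merge_edge_iff {G₁ G₂ : LGraph E} {u a : (G₁.merge G₂).V} :
    (G₁.merge G₂).edge u a ↔
      ((∃ x y, G₁.HasExt x u.1 ∧ G₁.HasExt y a.1 ∧ G₁.edge x y) ∨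
       (∃ x y, G₂.HasExt x u.1 ∧ G₂.HasExt y a.1 ∧ G₂.edge x y)) := Iff.rfl

lemma key_left {G₁ G₂ : LGraph E} (h1 : G₁.IsWDag S) (h2 : G₂.IsWDag S)
    (hcons : Consistent S G₁ G₂) {u a : (G₁.merge G₂).V}
    (ht : Relation.TransGen (G₁.merge G₂).edge u a) :
    ∀ v : G₁.V, a.1 = (G₁.label v, G₁.pos v) →
      ∃ w : G₁.V, u.1 = (G₁.label w, G₁.pos w) ∧ Relation.TransGen G₁.edge w v := by
  induction ht using Relation.TransGen.head_induction_on with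
  | single hr =>
    intro v hv
    rw [merge_edge_iff, hv] at hr
    obtain ⟨w, hw, he⟩ := step_abstract h1 h2 hcons v _ hr
    exact ⟨w, Prod.ext_iff.2 ⟨hw.1.symm, hw.2.symm⟩, Relation.TransGen.single he⟩
  | head hr hts ihp =>
    intro v hv
    obtain ⟨w', hc, htw⟩ := ihp v hv
    rw [merge_edge_iff, hc] at hr
    obtain ⟨w, hw, he⟩ := step_abstract h1 h2 hcons w' _ hr
    exact ⟨w, Prod.ext_iff.2 ⟨hw.1.symm, hw.2.symm⟩, Relation.TransGen.head he htw⟩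

lemma key_right {G₁ G₂ : LGraph E} (h1 : G₁.IsWDag S) (h2 : G₂.IsWDag S)
    (hcons : Consistent S G₁ G₂) {u a : (G₁.merge G₂).V}
    (ht : Relation.TransGen (G₁.merge G₂).edge u a) :
    ∀ v : G₂.V, a.1 = (G₂.label v, G₂.pos v) →
      ∃ w : G₂.V, u.1 = (G₂.label w, G₂.pos w) ∧ Relation.TransGen G₂.edge w v := by
  induction ht using Relation.TransGen.head_induction_on with
  | single hr =>
    intro v hv
    rw [merge_edge_iff, hv] at hr
    obtain ⟨w, hw, he⟩ :=
      step_abstract h2 h1 (fun i => (hcons i).symm) v _ hr.symm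
    exact ⟨w, Prod.ext_iff.2 ⟨hw.1.symm, hw.2.symm⟩, Relation.TransGen.single he⟩
  | head hr hts ihp =>
    intro v hv
    obtain ⟨w', hc, htw⟩ := ihp v hv
    rw [merge_edge_iff, hc] at hr
    obtain ⟨w, hw, he⟩ :=
      step_abstract h2 h1 (fun i => (hcons i).symm) w' _ hr.symm
    exact ⟨w, Prod.ext_iff.2 ⟨hw.1.symm, hw.2.symm⟩, Relation.TransGen.head he htw⟩

lemma vcount_merge_left {G₁ G₂ : LGraph E} (h1 : G₁.IsWDag S) (h2 : G₂.IsWDag S)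
    (hcons : Consistent S G₁ G₂) (v : G₁.V) (i : Fin n) :
    vcount S (G₁.merge G₂) i (mvl G₁ G₂ v) = vcount S G₁ i v := by
  classical
  symm
  apply Finset.card_bij (fun w _ => mvl G₁ G₂ w)
  · intro w hw
    simp only [Finset.mem_filter, Finset.mem_univ, true_and] at hw ⊢
    refine ⟨hw.1, ?_⟩
    refine Relation.TransGen.lift (mvl G₁ G₂) (fun a b hab => ?_) _ _ hw.2
    exact Or.inl ⟨a, b, ⟨rfl, rfl⟩, ⟨rfl, rfl⟩, hab⟩
  · intro w hw w' hw' heq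
    simp only [Finset.mem_filter, Finset.mem_univ, true_and] at hw hw'
    have h12 : (G₁.label w, G₁.pos w) = (G₁.label w', G₁.pos w') :=
      congrArg Subtype.val heq
    rw [Prod.mk.injEq] at h12
    by_contra hne
    rcases total_i h1 hw.1 hw'.1 hne with ht | ht
    · exact absurd h12.2 (Nat.ne_of_lt (pos_lt h1 h12.1 ht))
    · exact absurd h12.2.symm (Nat.ne_of_lt (pos_lt h1 h12.1.symm ht))
  · intro u hu
    simp only [Finset.mem_filter, Finset.mem_univ, true_and] at hu
    obtain ⟨w, hw, htw⟩ := key_left h1 h2 hcons hu.2 v rfl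
    have hiw : i ∈ S (G₁.label w) := by
      have : (G₁.merge G₂).label u = G₁.label w := by
        show u.1.1 = G₁.label w
        rw [hw]
      exact this ▸ hu.1
    refine ⟨w, Finset.mem_filter.2 ⟨Finset.mem_univ _, hiw, htw⟩, ?_⟩
    exact Subtype.ext hw.symm

lemma vcount_merge_right {G₁ G₂ : LGraph E} (h1 : G₁.IsWDag S) (h2 : G₂.IsWDag S)
    (hcons : Consistent S G₁ G₂) (v : G₂.V) (i : Fin n) :
    vcount S (G₁.merge G₂) i (mvr G₁ G₂ v) = vcount S G₂ i v := by
  classical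
  symm
  apply Finset.card_bij (fun w _ => mvr G₁ G₂ w)
  · intro w hw
    simp only [Finset.mem_filter, Finset.mem_univ, true_and] at hw ⊢
    refine ⟨hw.1, ?_⟩
    refine Relation.TransGen.lift (mvr G₁ G₂) (fun a b hab => ?_) _ _ hw.2
    exact Or.inr ⟨a, b, ⟨rfl, rfl⟩, ⟨rfl, rfl⟩, hab⟩
  · intro w hw w' hw' heq
    simp only [Finset.mem_filter, Finset.mem_univ, true_and] at hw hw'
    have h12 : (G₂.label w, G₂.pos w) = (G₂.label w', G₂.pos w') :=
      congrArg Subtype.val heq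
    rw [Prod.mk.injEq] at h12
    by_contra hne
    rcases total_i h2 hw.1 hw'.1 hne with ht | ht
    · exact absurd h12.2 (Nat.ne_of_lt (pos_lt h2 h12.1 ht))
    · exact absurd h12.2.symm (Nat.ne_of_lt (pos_lt h2 h12.1.symm ht))
  · intro u hu
    simp only [Finset.mem_filter, Finset.mem_univ, true_and] at hu
    obtain ⟨w, hw, htw⟩ := key_right h1 h2 hcons hu.2 v rfl
    have hiw : i ∈ S (G₂.label w) := by
      have : (G₁.merge G₂).label u = G₂.label w := by
        show u.1.1 = G₂.label w
        rw [hw]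
      exact this ▸ hu.1
    refine ⟨w, Finset.mem_filter.2 ⟨Finset.mem_univ _, hiw, htw⟩, ?_⟩
    exact Subtype.ext hw.symm

end Aux


/-- For consistent witness DAGs G₁, G₂ and a resampling table R,
the merge G₁ ∨ G₂ is compatible with R iff both G₁ and G₂ are. -/
theorem stmt18 {n : ℕ} {E Vl : Type} (S : E → Finset (Fin n))
    (Ev : E → (Fin n → Vl) → Prop)
    (hEvdep : ∀ b (x y : Fin n → Vl), (∀ i ∈ S b, x i = y i) → (Ev b x ↔ Ev b y))
    (R : Fin n → ℕ → Vl)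
    (G₁ G₂ : LGraph E) (h1 : G₁.IsWDag S) (h2 : G₂.IsWDag S)
    (hcons : LGraph.Consistent S G₁ G₂) :
    LGraph.Compat S Ev (G₁.merge G₂) R ↔
      (LGraph.Compat S Ev G₁ R ∧ LGraph.Compat S Ev G₂ R) := by
  constructor
  · intro hM
    constructor
    · intro v
      have hv := hM (mvl G₁ G₂ v)
      have hfun : (fun i => R i (LGraph.vcount S (G₁.merge G₂) i (mvl G₁ G₂ v))) =
          fun i => R i (LGraph.vcount S G₁ i v) :=
        funext fun i => by rw [vcount_merge_left h1 h2 hcons v i]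
      rw [hfun] at hv
      exact hv
    · intro v
      have hv := hM (mvr G₁ G₂ v)
      have hfun : (fun i => R i (LGraph.vcount S (G₁.merge G₂) i (mvr G₁ G₂ v))) =
          fun i => R i (LGraph.vcount S G₂ i v) :=
        funext fun i => by rw [vcount_merge_right h1 h2 hcons v i]
      rw [hfun] at hv
      exact hv
  · rintro ⟨hA, hB⟩ u
    rcases u.2 with ⟨v, hv⟩ | ⟨v, hv⟩
    · have hu : u = mvl G₁ G₂ v := Subtype.ext (Prod.ext_iff.2 ⟨hv.1.symm, hv.2.symm⟩)
      rw [hu]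
      have hfun : (fun i => R i (LGraph.vcount S (G₁.merge G₂) i (mvl G₁ G₂ v))) =
          fun i => R i (LGraph.vcount S G₁ i v) :=
        funext fun i => by rw [vcount_merge_left h1 h2 hcons v i]
      rw [hfun]
      exact hA v
    · have hu : u = mvr G₁ G₂ v := Subtype.ext (Prod.ext_iff.2 ⟨hv.1.symm, hv.2.symm⟩)
      rw [hu]
      have hfun : (fun i => R i (LGraph.vcount S (G₁.merge G₂) i (mvr G₁ G₂ v))) =
          fun i => R i (LGraph.vcount S G₂ i v) :=
        funext fun i => by rw [vcount_merge_right h1 h2 hcons v i]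
      rw [hfun]
      exact hB v

end LLL
end

section
/- Let R be a resampling table, let G be a witness DAG compatible with R, and let H be a prefix of G. Then H is compatible with R. -/
open scoped Classical

namespace LLL

section Aux

variable {n : ℕ} {E : Type}

/-- If `s` is closed under predecessors, a `TransGen` path in `G` ending in `s`
lifts to the induced subgraph. -/
lemma transGen_lift_induce {G : LGraph E} {s : Set G.V}
    (hs : ∀ u w, G.edge u w → w ∈ s → u ∈ s)
    {u : G.V} {v : (G.induce s).V} (h : Relation.TransGen G.edge u v.1) :
    ∃ hu : u ∈ s, Relation.TransGen (G.induce s).edge ⟨u, hu⟩ v := by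
  induction h using Relation.TransGen.head_induction_on with
  | single h => exact ⟨hs _ _ h v.2, Relation.TransGen.single h⟩
  | head h1 _h2 ih =>
    obtain ⟨hb, hpath⟩ := ih
    exact ⟨hs _ _ h1 hb, Relation.TransGen.head
      (show (G.induce s).edge ⟨_, hs _ _ h1 hb⟩ ⟨_, hb⟩ from h1) hpath⟩

lemma vcount_induce (S : E → Finset (Fin n)) {G : LGraph E} {s : Set G.V}
    (hs : ∀ u w, G.edge u w → w ∈ s → u ∈ s)
    (i : Fin n) (v : (G.induce s).V) :
    LGraph.vcount S (G.induce s) i v = LGraph.vcount S G i v.1 := by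
  unfold LGraph.vcount
  apply Finset.card_bij (fun u _ => u.1)
  · intro u hu
    simp only [Finset.mem_filter, Finset.mem_univ, true_and] at hu ⊢
    refine ⟨hu.1, ?_⟩
    exact Relation.TransGen.lift Subtype.val (fun a b h => h) _ _ hu.2
  · intro a _ b _ h
    exact Subtype.ext h
  · intro u hu
    simp only [Finset.mem_filter, Finset.mem_univ, true_and] at hu
    obtain ⟨hmem, hpath⟩ := transGen_lift_induce hs hu.2
    refine ⟨⟨u, hmem⟩, ?_, rfl⟩
    exact Finset.mem_filter.2 ⟨Finset.mem_univ _, hu.1, hpath⟩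

lemma reachSet_closed (G : LGraph E) (s : Set G.V) :
    ∀ u w, G.edge u w → w ∈ G.ReachSet s → u ∈ G.ReachSet s := by
  rintro u w h ⟨x, hx, hpath⟩
  exact ⟨x, hx, Relation.ReflTransGen.head h hpath⟩

lemma transGen_iso {G H : LGraph E} (e : G.V ≃ H.V)
    (he : ∀ v w, H.edge (e v) (e w) ↔ G.edge v w) {u v : G.V} :
    Relation.TransGen H.edge (e u) (e v) ↔ Relation.TransGen G.edge u v := by
  constructor
  · intro h
    have := Relation.TransGen.lift e.symm
      (fun a b (hab : H.edge a b) => by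
        have : H.edge (e (e.symm a)) (e (e.symm b)) := by simpa using hab
        exact (he _ _).1 this) _ _ h
    simpa [Function.onFun] using this
  · intro h
    exact Relation.TransGen.lift e (fun a b hab => (he a b).2 hab) _ _ h

lemma compat_of_liso {Vl : Type} (S : E → Finset (Fin n)) (Ev : E → (Fin n → Vl) → Prop)
    (R : Fin n → ℕ → Vl) {G H : LGraph E} (hiso : LGraph.LIso H G)
    (hcomp : LGraph.Compat S Ev G R) : LGraph.Compat S Ev H R := by
  obtain ⟨e, hlab, hedge⟩ := hiso
  intro v
  have hv := hcomp (e v)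
  have hvc : ∀ i, LGraph.vcount S G i (e v) = LGraph.vcount S H i v := by
    intro i
    unfold LGraph.vcount
    apply Finset.card_bij (fun u _ => e.symm u)
    · intro u hu
      simp only [Finset.mem_filter, Finset.mem_univ, true_and] at hu ⊢
      constructor
      · rw [← hlab]; simpa using hu.1
      · have : Relation.TransGen G.edge (e (e.symm u)) (e v) := by simpa using hu.2
        exact (transGen_iso e hedge).1 this
    · intro a _ b _ h
      simpa using congrArg e h
    · intro u hu
      simp only [Finset.mem_filter, Finset.mem_univ, true_and] at hu
      refine ⟨e u, ?_, by simp⟩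
      simp only [Finset.mem_filter, Finset.mem_univ, true_and]
      exact ⟨by rw [hlab]; exact hu.1, (transGen_iso e hedge).2 hu.2⟩
  have hcfg : (fun i => R i (LGraph.vcount S G i (e v))) =
      fun i => R i (LGraph.vcount S H i v) := by
    funext i; rw [hvc]
  rw [hlab, hcfg] at hv
  exact hv

end Aux

/-- If a witness DAG G is compatible with a resampling table R and
H is a prefix of G, then H is compatible with R. -/
theorem stmt19 {n : ℕ} {E Vl : Type} (S : E → Finset (Fin n))
    (Ev : E → (Fin n → Vl) → Prop)
    (hEvdep : ∀ b (x y : Fin n → Vl), (∀ i ∈ S b, x i = y i) → (Ev b x ↔ Ev b y))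
    (R : Fin n → ℕ → Vl)
    (G H : LGraph E) (hG : G.IsWDag S)
    (hcomp : LGraph.Compat S Ev G R) (hpre : H.IsPrefix G) :
    LGraph.Compat S Ev H R := by
  obtain ⟨s, hiso⟩ := hpre
  apply compat_of_liso S Ev R hiso
  intro v
  have hv := hcomp v.1
  have hcfg : (fun i => R i (LGraph.vcount S (G.induce (G.ReachSet s)) i v)) =
      fun i => R i (LGraph.vcount S G i v.1) := by
    funext i; rw [vcount_induce S (reachSet_closed G s)]
  rw [hcfg]
  exact hv

end LLL
end
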